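/- Let f = h·conj(g) be a nonvanishing logharmonic Bloch mapping in 𝔻 with dilatation ω = g'h/(gh'). Then ‖P_f‖ = sup_{z∈𝔻}(1−|z|²)|P_f(z)| is finite if and only if ‖P_h‖ = sup_{z∈𝔻}(1−|z|²)|h''(z)/h'(z)| is finite; and if ‖P_h‖ < ∞ then | ‖P_f‖ − ‖P_h‖ | ≤ β_{log g} + 1, where β_{log g} = sup_{z∈𝔻}(1−|z|²)|g'(z)/g(z)|. -/

import Mathlib

open Complex Metric Set

def unitDisk : Set ℂ := Metric.ball 0 1

noncomputable def logPreSch (h g ω : ℂ → ℂ) : ℂ → ℂ := fun z =>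
  deriv (deriv h) z / deriv h z + deriv g z / g z -
    (starRingEnd ℂ) (ω z) * deriv ω z / ((1 - ‖ω z‖ ^ 2 : ℝ) : ℂ)

def normSet (P : ℂ → ℂ) : Set ℝ :=
  {r | ∃ z ∈ unitDisk, r = (1 - ‖z‖ ^ 2) * ‖P z‖}


noncomputable def mob (a : ℂ) : ℂ → ℂ := fun w => (a - w) / (1 - (starRingEnd ℂ) a * w)

lemma mob_ne {a w : ℂ} (ha : ‖a‖ < 1) (hw : ‖w‖ < 1) : 1 - (starRingEnd ℂ) a * w ≠ 0 := by
  intro h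
  have h1 : (starRingEnd ℂ) a * w = 1 := by linear_combination -h
  have : ‖(starRingEnd ℂ) a * w‖ = 1 := by rw [h1]; simp
  rw [norm_mul, RCLike.norm_conj] at this
  nlinarith [norm_nonneg a, norm_nonneg w]

lemma mob_maps {a w : ℂ} (ha : ‖a‖ < 1) (hw : ‖w‖ < 1) : ‖mob a w‖ < 1 := by
  have key : Complex.normSq (1 - (starRingEnd ℂ) a * w) - Complex.normSq (a - w)
      = (1 - Complex.normSq a) * (1 - Complex.normSq w) := by
    simp [Complex.normSq_apply, Complex.sub_re, Complex.sub_im, Complex.mul_re, Complex.mul_im,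
      Complex.conj_re, Complex.conj_im, Complex.one_re, Complex.one_im]
    ring
  have hna : Complex.normSq a = ‖a‖^2 := by rw [Complex.normSq_eq_norm_sq]
  have hnw : Complex.normSq w = ‖w‖^2 := by rw [Complex.normSq_eq_norm_sq]
  have p1 : 0 < 1 - Complex.normSq a := by rw [hna]; nlinarith [norm_nonneg a]
  have p2 : 0 < 1 - Complex.normSq w := by rw [hnw]; nlinarith [norm_nonneg w]
  have h2 : Complex.normSq (a - w) < Complex.normSq (1 - (starRingEnd ℂ) a * w) := by
    have := mul_pos p1 p2; rw [← key] at this; linarith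
  have hden := mob_ne ha hw
  rw [mob, norm_div, div_lt_one (norm_pos_iff.2 hden)]
  have e1 : Complex.normSq (a - w) = ‖a - w‖^2 := by rw [Complex.normSq_eq_norm_sq]
  have e2 : Complex.normSq (1 - (starRingEnd ℂ) a * w) = ‖1 - (starRingEnd ℂ) a * w‖^2 := by
    rw [Complex.normSq_eq_norm_sq]
  nlinarith [norm_nonneg (a - w), norm_nonneg (1 - (starRingEnd ℂ) a * w)]

lemma mob_hasDeriv {a w : ℂ} (ha : ‖a‖ < 1) (hw : ‖w‖ < 1) :
    HasDerivAt (mob a) (((starRingEnd ℂ) a * a - 1) / (1 - (starRingEnd ℂ) a * w)^2) w := by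
  have h1 : HasDerivAt (fun w : ℂ => a - w) (-1) w := by
    simpa using (hasDerivAt_id w).const_sub a
  have h2 : HasDerivAt (fun w : ℂ => 1 - (starRingEnd ℂ) a * w) (-(starRingEnd ℂ) a) w := by
    simpa using ((hasDerivAt_id w).const_mul ((starRingEnd ℂ) a)).const_sub 1
  have hden := mob_ne ha hw
  have := h1.div h2 hden
  rw [show ((starRingEnd ℂ) a * a - 1) = (-1 * (1 - (starRingEnd ℂ) a * w) - (a - w) * -(starRingEnd ℂ) a) by ring]
  exact this

lemma conj_mul_self (b : ℂ) : (starRingEnd ℂ) b * b = ((‖b‖^2 : ℝ) : ℂ) := by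
  rw [mul_comm, Complex.mul_conj, Complex.normSq_eq_norm_sq]

lemma schwarzPick {ω : ℂ → ℂ} (hd : DifferentiableOn ℂ ω (ball 0 1))
    (hm : ∀ z ∈ ball (0:ℂ) 1, ω z ∈ ball (0:ℂ) 1) {z : ℂ} (hz : z ∈ ball (0:ℂ) 1) :
    (1 - ‖z‖^2) * ‖deriv ω z‖ ≤ 1 - ‖ω z‖^2 := by
  rw [mem_ball_zero_iff] at hz
  have hb : ‖ω z‖ < 1 := mem_ball_zero_iff.1 (hm z (mem_ball_zero_iff.2 hz))
  set b := ω z with hbdef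
  set F : ℂ → ℂ := fun w => mob b (ω (mob z w)) with hF
  have hder : ∀ w, ‖w‖ < 1 → HasDerivAt F
      ((((starRingEnd ℂ) b * b - 1) / (1 - (starRingEnd ℂ) b * ω (mob z w))^2)
        * (deriv ω (mob z w) * (((starRingEnd ℂ) z * z - 1) / (1 - (starRingEnd ℂ) z * w)^2))) w := by
    intro w hw
    have h1 := mob_hasDeriv hz hw
    have hin : ‖mob z w‖ < 1 := mob_maps hz hw
    have h2 : HasDerivAt ω (deriv ω (mob z w)) (mob z w) :=
      (hd.differentiableAt (isOpen_ball.mem_nhds (mem_ball_zero_iff.2 hin))).hasDerivAt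
    have hin2 : ‖ω (mob z w)‖ < 1 := mem_ball_zero_iff.1 (hm _ (mem_ball_zero_iff.2 hin))
    have h3 := mob_hasDeriv hb hin2
    exact (h3.comp w (h2.comp w h1) : _)
  have hdF : DifferentiableOn ℂ F (ball 0 1) := fun w hw =>
    ((hder w (mem_ball_zero_iff.1 hw)).differentiableAt).differentiableWithinAt
  have hz0 : mob z 0 = z := by simp [mob]
  have hF0 : F 0 = 0 := by rw [hF]; simp only [hz0, ← hbdef]; simp [mob]
  have hmapsF : MapsTo F (ball 0 1) (ball (F 0) 1) := by
    intro w hw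
    rw [hF0, mem_ball_zero_iff]
    exact mob_maps hb (mem_ball_zero_iff.1 (hm _ (mem_ball_zero_iff.2
      (mob_maps hz (mem_ball_zero_iff.1 hw)))))
  have hle := Complex.norm_deriv_le_div_of_mapsTo_ball hdF (hmapsF.mono_right ball_subset_closedBall) one_pos
  rw [(hder 0 (by simp)).deriv, hz0] at hle
  rw [conj_mul_self b, conj_mul_self z] at hle
  simp only [mul_zero, sub_zero, one_pow, div_one, ← hbdef] at hle
  have pb : (0:ℝ) < 1 - ‖b‖^2 := by nlinarith [norm_nonneg b]
  have n1 : ‖(((‖b‖^2 : ℝ) : ℂ) - 1)‖ = 1 - ‖b‖^2 := by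
    rw [show (((‖b‖^2:ℝ):ℂ) - 1) = ((‖b‖^2 - 1 : ℝ):ℂ) by push_cast; ring,
      Complex.norm_real, Real.norm_eq_abs, abs_of_nonpos (by nlinarith)]
    ring
  have n2 : ‖(1 - ((‖b‖^2 : ℝ) : ℂ))^2‖ = (1 - ‖b‖^2)^2 := by
    rw [norm_pow, show (1 - ((‖b‖^2:ℝ):ℂ)) = ((1 - ‖b‖^2 : ℝ):ℂ) by push_cast; ring,
      Complex.norm_real, Real.norm_eq_abs, abs_of_pos pb]
  have n3 : ‖(((‖z‖^2 : ℝ) : ℂ) - 1)‖ = 1 - ‖z‖^2 := by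
    rw [show (((‖z‖^2:ℝ):ℂ) - 1) = ((‖z‖^2 - 1 : ℝ):ℂ) by push_cast; ring,
      Complex.norm_real, Real.norm_eq_abs, abs_of_nonpos (by nlinarith [norm_nonneg z, hz])]
    ring
  rw [norm_mul, norm_mul, norm_div, n1, n2, n3] at hle
  have e : (1 - ‖b‖^2) / (1 - ‖b‖^2)^2 = 1 / (1 - ‖b‖^2) := by
    rw [div_eq_div_iff (pow_ne_zero 2 pb.ne') pb.ne']; ring
  rw [e, one_div_mul_eq_div, div_le_one pb] at hle
  rw [mul_comm]; exact hle

/-- For a nonvanishing logharmonic Bloch mapping `f = h ⬝ conj g`, the pre-Schwarzian norm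
`‖P_f‖` is finite iff `‖P_h‖` is finite, and then `| ‖P_f‖ − ‖P_h‖ | ≤ β_{log g} + 1`. -/
theorem preSchwarzian_f_vs_h (h g ω : ℂ → ℂ)
    (hh : DifferentiableOn ℂ h unitDisk) (hh' : DifferentiableOn ℂ (deriv h) unitDisk)
    (hg : DifferentiableOn ℂ g unitDisk)
    (hhne : ∀ z ∈ unitDisk, h z ≠ 0) (hgne : ∀ z ∈ unitDisk, g z ≠ 0)
    (hh'ne : ∀ z ∈ unitDisk, deriv h z ≠ 0)
    (hωdef : ∀ z ∈ unitDisk, ω z = deriv g z * h z / (g z * deriv h z))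
    (hωmap : ∀ z ∈ unitDisk, ω z ∈ unitDisk)
    (hBloch : BddAbove {r | ∃ z ∈ unitDisk,
        r = (1 - ‖z‖ ^ 2) * (‖deriv h z / h z‖ + ‖deriv g z / g z‖)}) :
    (BddAbove (normSet (logPreSch h g ω)) ↔
        BddAbove (normSet (fun z => deriv (deriv h) z / deriv h z))) ∧
      (BddAbove (normSet (fun z => deriv (deriv h) z / deriv h z)) →
        |sSup (normSet (logPreSch h g ω)) -
            sSup (normSet (fun z => deriv (deriv h) z / deriv h z))| ≤
          sSup {r | ∃ z ∈ unitDisk, r = (1 - ‖z‖ ^ 2) * ‖deriv g z / g z‖} + 1) := by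
  have hopen : IsOpen unitDisk := isOpen_ball
  have h0mem : (0:ℂ) ∈ unitDisk := mem_ball_self one_pos
  -- ω is differentiable on the disk
  have hg' : DifferentiableOn ℂ (deriv g) unitDisk :=
    ((hg.analyticOnNhd hopen).deriv).differentiableOn
  have hexpr : DifferentiableOn ℂ (fun z => deriv g z * h z / (g z * deriv h z)) unitDisk := by
    refine DifferentiableOn.div (hg'.mul hh) ((hg.mono (subset_refl _)).mul hh') ?_
    exact fun z hz => mul_ne_zero (hgne z hz) (hh'ne z hz)
  have hωdiff : DifferentiableOn ℂ ω unitDisk := hexpr.congr hωdef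
  -- key pointwise estimate
  have hkey : ∀ z ∈ unitDisk,
      |(1 - ‖z‖^2) * ‖logPreSch h g ω z‖
        - (1 - ‖z‖^2) * ‖deriv (deriv h) z / deriv h z‖|
      ≤ (1 - ‖z‖^2) * ‖deriv g z / g z‖ + 1 := by
    intro z hz
    have hz1 : ‖z‖ < 1 := mem_ball_zero_iff.1 hz
    have ht : (0:ℝ) < 1 - ‖z‖^2 := by nlinarith [norm_nonneg z]
    have hω1 : ‖ω z‖ < 1 := mem_ball_zero_iff.1 (hωmap z hz)
    have pω : (0:ℝ) < 1 - ‖ω z‖^2 := by nlinarith [norm_nonneg (ω z)]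
    have SP := schwarzPick hωdiff hωmap hz
    have hT : (1 - ‖z‖^2) * ‖(starRingEnd ℂ) (ω z) * deriv ω z / ((1 - ‖ω z‖^2 : ℝ) : ℂ)‖ ≤ 1 := by
      rw [norm_div, norm_mul, RCLike.norm_conj, Complex.norm_real, Real.norm_eq_abs,
        abs_of_pos pω]
      have e : (1 - ‖z‖^2) * (‖ω z‖ * ‖deriv ω z‖ / (1 - ‖ω z‖^2))
          = ‖ω z‖ * ((1 - ‖z‖^2) * ‖deriv ω z‖) / (1 - ‖ω z‖^2) := by ring
      rw [e, div_le_one pω]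
      nlinarith [norm_nonneg (ω z), mul_nonneg ht.le (norm_nonneg (deriv ω z)),
        mul_nonneg (by linarith : (0:ℝ) ≤ 1 - ‖ω z‖)
          (mul_nonneg ht.le (norm_nonneg (deriv ω z)))]
    have hdiff : logPreSch h g ω z - deriv (deriv h) z / deriv h z
        = deriv g z / g z - (starRingEnd ℂ) (ω z) * deriv ω z / ((1 - ‖ω z‖^2 : ℝ) : ℂ) := by
      simp only [logPreSch]; ring
    calc |(1 - ‖z‖^2) * ‖logPreSch h g ω z‖
          - (1 - ‖z‖^2) * ‖deriv (deriv h) z / deriv h z‖|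
        = (1 - ‖z‖^2) * |‖logPreSch h g ω z‖ - ‖deriv (deriv h) z / deriv h z‖| := by
          rw [← mul_sub, abs_mul, abs_of_pos ht]
      _ ≤ (1 - ‖z‖^2) * ‖logPreSch h g ω z - deriv (deriv h) z / deriv h z‖ :=
          mul_le_mul_of_nonneg_left (abs_norm_sub_norm_le _ _) ht.le
      _ = (1 - ‖z‖^2) * ‖deriv g z / g z
            - (starRingEnd ℂ) (ω z) * deriv ω z / ((1 - ‖ω z‖^2 : ℝ) : ℂ)‖ := by rw [hdiff]
      _ ≤ (1 - ‖z‖^2) * (‖deriv g z / g z‖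
            + ‖(starRingEnd ℂ) (ω z) * deriv ω z / ((1 - ‖ω z‖^2 : ℝ) : ℂ)‖) :=
          mul_le_mul_of_nonneg_left (norm_sub_le _ _) ht.le
      _ = (1 - ‖z‖^2) * ‖deriv g z / g z‖
            + (1 - ‖z‖^2) * ‖(starRingEnd ℂ) (ω z) * deriv ω z / ((1 - ‖ω z‖^2 : ℝ) : ℂ)‖ := by
          ring
      _ ≤ (1 - ‖z‖^2) * ‖deriv g z / g z‖ + 1 := by linarith
  -- the β set
  set S : Set ℝ := {r | ∃ z ∈ unitDisk, r = (1 - ‖z‖ ^ 2) * ‖deriv g z / g z‖} with hSdef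
  have hSb : BddAbove S := by
    obtain ⟨K, hK⟩ := hBloch
    refine ⟨K, ?_⟩
    rintro r ⟨z, hz, rfl⟩
    have hz1 : ‖z‖ < 1 := mem_ball_zero_iff.1 hz
    have ht : (0:ℝ) ≤ 1 - ‖z‖^2 := by nlinarith [norm_nonneg z]
    have h1 : (1 - ‖z‖^2) * ‖deriv g z / g z‖
        ≤ (1 - ‖z‖^2) * (‖deriv h z / h z‖ + ‖deriv g z / g z‖) := by
      have := norm_nonneg (deriv h z / h z); nlinarith
    exact h1.trans (hK ⟨z, hz, rfl⟩)
  have hkey2 : ∀ z ∈ unitDisk,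
      |(1 - ‖z‖^2) * ‖logPreSch h g ω z‖
        - (1 - ‖z‖^2) * ‖deriv (deriv h) z / deriv h z‖| ≤ sSup S + 1 := by
    intro z hz
    have h1 := hkey z hz
    have h2 : (1 - ‖z‖^2) * ‖deriv g z / g z‖ ≤ sSup S := le_csSup hSb ⟨z, hz, rfl⟩
    linarith
  have hiff : BddAbove (normSet (logPreSch h g ω)) ↔
      BddAbove (normSet (fun z => deriv (deriv h) z / deriv h z)) := by
    constructor
    · rintro ⟨K, hK⟩
      refine ⟨K + (sSup S + 1), ?_⟩
      rintro r ⟨z, hz, rfl⟩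
      have h1 := abs_le.1 (hkey2 z hz)
      have h2 : (1 - ‖z‖^2) * ‖logPreSch h g ω z‖ ≤ K := hK ⟨z, hz, rfl⟩
      simp only []
      linarith [h1.1]
    · rintro ⟨K, hK⟩
      refine ⟨K + (sSup S + 1), ?_⟩
      rintro r ⟨z, hz, rfl⟩
      have h1 := abs_le.1 (hkey2 z hz)
      have h2 : (1 - ‖z‖^2) * ‖deriv (deriv h) z / deriv h z‖ ≤ K := hK ⟨z, hz, rfl⟩
      linarith [h1.2]
  refine ⟨hiff, fun hB => ?_⟩
  have hA := hiff.2 hB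
  have hAne : (normSet (logPreSch h g ω)).Nonempty := ⟨_, 0, h0mem, rfl⟩
  have hBne : (normSet (fun z => deriv (deriv h) z / deriv h z)).Nonempty := ⟨_, 0, h0mem, rfl⟩
  have s1 : sSup (normSet (logPreSch h g ω))
      ≤ sSup (normSet (fun z => deriv (deriv h) z / deriv h z)) + (sSup S + 1) := by
    refine csSup_le hAne ?_
    rintro r ⟨z, hz, rfl⟩
    have h1 := abs_le.1 (hkey2 z hz)
    have h2 : (1 - ‖z‖^2) * ‖deriv (deriv h) z / deriv h z‖
        ≤ sSup (normSet (fun z => deriv (deriv h) z / deriv h z)) := le_csSup hB ⟨z, hz, rfl⟩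
    linarith [h1.2]
  have s2 : sSup (normSet (fun z => deriv (deriv h) z / deriv h z))
      ≤ sSup (normSet (logPreSch h g ω)) + (sSup S + 1) := by
    refine csSup_le hBne ?_
    rintro r ⟨z, hz, rfl⟩
    have h1 := abs_le.1 (hkey2 z hz)
    have h2 : (1 - ‖z‖^2) * ‖logPreSch h g ω z‖
        ≤ sSup (normSet (logPreSch h g ω)) := le_csSup hA ⟨z, hz, rfl⟩
    linarith [h1.1]
  exact abs_sub_le_iff.2 ⟨by linarith, by linarith⟩
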